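/- Let A be an n×n real symmetric positive semidefinite matrix with A ≠ 0, B an n×n real symmetric positive definite matrix, and λ₁ = max_{x≠0} (xᵀAx)/(xᵀBx). Suppose x ∈ ℝⁿ is a stationary point of f that is not a global minimizer; that is, Ax ≠ 0, Ax = λ·Bx with λ = 2(xᵀAx)^{1/2}, and λ < λ₁. Then x is a strict saddle point: there exists a vector w ∈ ℝⁿ with wᵀ H_f(x) w < 0, where H_f(x) = 2B − A/(xᵀAx)^{1/2} + (Ax)(Ax)ᵀ/(xᵀAx)^{3/2} is the Hessian of f at x. -/

import Mathlib

open Matrix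

lemma vecMulVec_mulVec_eq {n : ℕ} (u v w : Fin n → ℝ) :
    vecMulVec u v *ᵥ w = (v ⬝ᵥ w) • u := by
  ext i
  simp [vecMulVec_apply, mulVec, dotProduct, Finset.sum_mul, Finset.mul_sum, mul_comm,
    mul_assoc, mul_left_comm]

lemma dot_mulVec_symm {n : ℕ} (A : Matrix (Fin n) (Fin n) ℝ) (h : A.IsHermitian)
    (u v : Fin n → ℝ) : u ⬝ᵥ A *ᵥ v = v ⬝ᵥ A *ᵥ u := by
  have hT : Aᵀ = A := by
    ext i j; simpa using congrFun (congrFun h.eq i) j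
  rw [dotProduct_mulVec, ← mulVec_transpose, hT, dotProduct_comm]

/-- Every stationary point of `f(x) = xᵀBx − √(xᵀAx)` which is not a global minimizer
(i.e. a generalized eigenvector with eigenvalue `λ = 2√(xᵀAx) < λ₁`) is a strict saddle:
the Hessian `H_f(x) = 2B − A/√(xᵀAx) + (Ax)(Ax)ᵀ/(xᵀAx)^{3/2}` has a direction of
negative curvature. -/
theorem stmt_3 {n : ℕ} (A B : Matrix (Fin n) (Fin n) ℝ)
    (hA : A.PosSemidef) (hA0 : A ≠ 0) (hB : B.PosDef) (lam1 : ℝ)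
    (hlam : IsGreatest
      {r : ℝ | ∃ z : Fin n → ℝ, z ≠ 0 ∧ r = (z ⬝ᵥ A *ᵥ z) / (z ⬝ᵥ B *ᵥ z)} lam1)
    (x : Fin n → ℝ) (hx : A *ᵥ x ≠ 0) (lam : ℝ)
    (hlamdef : lam = 2 * Real.sqrt (x ⬝ᵥ A *ᵥ x))
    (heig : A *ᵥ x = lam • (B *ᵥ x)) (hlt : lam < lam1) :
    ∃ w : Fin n → ℝ,
      w ⬝ᵥ (((2 : ℝ) • B - (Real.sqrt (x ⬝ᵥ A *ᵥ x))⁻¹ • A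
        + ((Real.sqrt (x ⬝ᵥ A *ᵥ x)) ^ 3)⁻¹ • vecMulVec (A *ᵥ x) (A *ᵥ x)) *ᵥ w) < 0 := by
  obtain ⟨⟨z, hz0, hz⟩, _⟩ := hlam
  -- positivity of xᵀAx
  have hxAx : 0 < x ⬝ᵥ A *ᵥ x := by
    have h1 := hA.dotProduct_mulVec_nonneg x
    have h2 := hA.dotProduct_mulVec_zero_iff x
    simp only [star_trivial] at h1 h2
    exact lt_of_le_of_ne h1 (fun h => hx (h2.mp h.symm))
  set s : ℝ := Real.sqrt (x ⬝ᵥ A *ᵥ x) with hsdef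
  have hs0 : 0 < s := Real.sqrt_pos.2 hxAx
  have hs2 : s ^ 2 = x ⬝ᵥ A *ᵥ x := Real.sq_sqrt hxAx.le
  -- basic bilinear identities
  have hsymB := dot_mulVec_symm B hB.1
  have hsymA := dot_mulVec_symm A hA.1
  have hb : 0 < z ⬝ᵥ B *ᵥ z := by
    have := hB.dotProduct_mulVec_pos hz0
    simpa using this
  have hza : z ⬝ᵥ A *ᵥ z = lam1 * (z ⬝ᵥ B *ᵥ z) := by
    field_simp at hz
    linarith [hz]
  set p : ℝ := x ⬝ᵥ B *ᵥ z with hpdef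
  have hzBx : z ⬝ᵥ B *ᵥ x = p := hsymB z x
  have hxBx : x ⬝ᵥ B *ᵥ x = s / 2 := by
    have h1 : x ⬝ᵥ A *ᵥ x = lam * (x ⬝ᵥ B *ᵥ x) := by
      rw [heig, dotProduct_smul, smul_eq_mul]
    rw [hlamdef, ← hs2] at h1
    have h2 := mul_left_cancel₀ (ne_of_gt hs0)
      (by nlinarith [h1] : s * s = s * (2 * (x ⬝ᵥ B *ᵥ x)))
    linarith
  have hzAx : z ⬝ᵥ A *ᵥ x = 2 * s * p := by
    rw [heig, dotProduct_smul, smul_eq_mul, hzBx, hlamdef]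
  have hxAz : x ⬝ᵥ A *ᵥ z = 2 * s * p := by rw [hsymA, hzAx]
  -- the saddle direction
  set c : ℝ := 2 * p / s with hcdef
  refine ⟨z - c • x, ?_⟩
  have hwAx : (z - c • x) ⬝ᵥ A *ᵥ x = 0 := by
    rw [sub_dotProduct, smul_dotProduct, smul_eq_mul, hzAx, ← hs2, hcdef]
    field_simp
    ring
  simp only [add_mulVec, sub_mulVec, Matrix.smul_mulVec, vecMulVec_mulVec_eq,
    dotProduct_add, dotProduct_sub, dotProduct_smul, sub_dotProduct, smul_dotProduct,
    mulVec_sub, mulVec_smul, smul_eq_mul]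
  rw [dotProduct_comm (A *ᵥ x)]
  have h0 : z ⬝ᵥ A *ᵥ x - c * (x ⬝ᵥ A *ᵥ x) = 0 := by
    rw [hzAx, ← hs2, hcdef]
    field_simp
    ring
  rw [h0]
  simp only [mul_zero, zero_mul, add_zero]
  rw [← hpdef, hza, hzBx, hxBx, hxAz, hcdef]
  have hne : s ≠ 0 := ne_of_gt hs0
  have hslam : 2 * s < lam1 := by rw [hlamdef] at hlt; exact hlt
  have h2 : (2 * s - lam1) * (z ⬝ᵥ B *ᵥ z) / s < 0 :=
    div_neg_of_neg_of_pos (mul_neg_of_neg_of_pos (by linarith) hb) hs0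
  refine lt_of_le_of_lt (le_of_eq ?_) h2
  field_simp
  ring
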